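/- If two merge trees M and N admit compatible presentations P_M and P_N with ‖L(P_M) − L(P_N)‖_∞ = ε, then M and N are ε-interleaved. -/

import Mathlib

open scoped ENNReal NNReal

/-- A persistent set: a functor `ℝ → Set`, with `ℝ` regarded as a poset category. -/
structure PersistentSet where
  obj : ℝ → Type
  map : ∀ {s t : ℝ}, s ≤ t → obj s → obj t
  map_id : ∀ (t : ℝ) (x : obj t), map (le_refl t) x = x
  map_comp : ∀ {s t u : ℝ} (h1 : s ≤ t) (h2 : t ≤ u) (x : obj s),
    map h2 (map h1 x) = map (le_trans h1 h2) x

/-- An `ε`-interleaving between persistent sets `M` and `N`. -/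
def Interleaved (M N : PersistentSet) (ε : ℝ) : Prop :=
  ∃ (hε : 0 ≤ ε) (φ : ∀ t, M.obj t → N.obj (t + ε)) (ψ : ∀ t, N.obj t → M.obj (t + ε)),
    (∀ (s t : ℝ) (h : s ≤ t) (x : M.obj s),
      φ t (M.map h x) = N.map (by linarith : s + ε ≤ t + ε) (φ s x)) ∧
    (∀ (s t : ℝ) (h : s ≤ t) (x : N.obj s),
      ψ t (N.map h x) = M.map (by linarith : s + ε ≤ t + ε) (ψ s x)) ∧
    (∀ (s : ℝ) (x : M.obj s), ψ (s + ε) (φ s x) = M.map (by linarith : s ≤ s + ε + ε) x) ∧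
    (∀ (s : ℝ) (x : N.obj s), φ (s + ε) (ψ s x) = N.map (by linarith : s ≤ s + ε + ε) x)

/-- A persistent set is constructible if it has a finite set of critical values:
it is empty before the first critical value, and the internal maps are
isomorphisms between consecutive critical values. -/
def Constructible (M : PersistentSet) : Prop :=
  ∃ τ : Finset ℝ,
    (∀ t : ℝ, (∀ s ∈ τ, t < s) → IsEmpty (M.obj t)) ∧
    (∀ (s t : ℝ) (h : s ≤ t), (∀ c ∈ τ, c ≤ s ∨ t < c) → Function.Bijective (M.map h))

/-- A merge tree: a constructible persistent set with finite values which is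
eventually a singleton. -/
structure MergeTree where
  toPS : PersistentSet
  constructible : Constructible toPS
  finite : ∀ t, Finite (toPS.obj t)
  eventually_one : ∃ T : ℝ, ∀ t, T ≤ t → (Nonempty (toPS.obj t) ∧ Subsingleton (toPS.obj t))

/-- Combinatorial data of a presentation: `k` generator strands with birth times `γ`,
`l` relation strands with birth times `ρ`, and for each relation two merge maps
`f j`, `g j` into the generators (a map of strands `R_j → G_i` exists iff
`γ i ≤ ρ j`, which is the content of `hf`, `hg`). -/
structure Pres (k l : ℕ) where
  γ : Fin k → ℝ
  ρ : Fin l → ℝ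
  f : Fin l → Fin k
  g : Fin l → Fin k
  hf : ∀ j, γ (f j) ≤ ρ j
  hg : ∀ j, γ (g j) ≤ ρ j

/-- The relation at time `t` identifying the two targets of each relation strand
born by time `t`. -/
def Pres.rel {k l : ℕ} (P : Pres k l) (t : ℝ) :
    {i : Fin k // P.γ i ≤ t} → {i : Fin k // P.γ i ≤ t} → Prop :=
  fun a b => ∃ j : Fin l, P.ρ j ≤ t ∧
    ((P.f j = a.1 ∧ P.g j = b.1) ∨ (P.f j = b.1 ∧ P.g j = a.1))

/-- The persistent set presented by `P`: the pointwise coequalizer of the pair of maps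
`⊔ⱼ Rⱼ ⇉ ⊔ᵢ Gᵢ` of disjoint unions of strands. -/
def Pres.toPS {k l : ℕ} (P : Pres k l) : PersistentSet where
  obj t := Quot (P.rel t)
  map := fun {s t} h =>
    Quot.lift (fun a => Quot.mk (P.rel t) ⟨a.1, le_trans a.2 h⟩)
      (fun a b hab => Quot.sound (by
        obtain ⟨j, hj, hc⟩ := hab
        exact ⟨j, le_trans hj h, hc⟩))
  map_id := fun t x => Quot.inductionOn x fun a => rfl
  map_comp := fun h1 h2 x => Quot.inductionOn x fun a => rfl

/-- An isomorphism of persistent sets: a natural family of bijections. -/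
structure PSIso (M N : PersistentSet) where
  hom : ∀ t, M.obj t → N.obj t
  natural : ∀ {s t : ℝ} (h : s ≤ t) (x : M.obj s), hom t (M.map h x) = N.map h (hom s x)
  bij : ∀ t, Function.Bijective (hom t)

/-- `P` is a presentation of the persistent set `M`. -/
def IsPresentation {k l : ℕ} (P : Pres k l) (M : PersistentSet) : Prop :=
  Nonempty (PSIso P.toPS M)

/-- Two presentations are compatible if their underlying 0-1 presentation matrices agree:
entry `(i,j)` is 1 iff one of the two merge maps of relation `j` lands in generator `i`. -/
def Compatible {k l : ℕ} (P Q : Pres k l) : Prop :=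
  ∀ (i : Fin k) (j : Fin l), (P.f j = i ∨ P.g j = i) ↔ (Q.f j = i ∨ Q.g j = i)

/-- The `ℓp`-norm of a finite vector of reals, `p ∈ [1,∞]`. -/
noncomputable def lpNorm (p : ℝ≥0∞) {n : ℕ} (x : Fin n → ℝ) : ℝ :=
  if p = ⊤ then ⨆ i, |x i| else (∑ i, |x i| ^ p.toReal) ^ (1 / p.toReal)

/-- The difference of the label vectors of two compatible presentations: the vector of
differences of generator birth times followed by differences of relation birth times. -/
noncomputable def labelDiff {k l : ℕ} (P Q : Pres k l) : Fin (k + l) → ℝ :=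
  Fin.append (fun i => P.γ i - Q.γ i) (fun j => P.ρ j - Q.ρ j)

/-- The `p`-presentation semi-distance between merge trees. -/
noncomputable def dHat (p : ℝ≥0∞) (M N : MergeTree) : ℝ :=
  sInf {c | ∃ (k l : ℕ) (P Q : Pres k l), Compatible P Q ∧
    IsPresentation P M.toPS ∧ IsPresentation Q N.toPS ∧
    c = lpNorm p (labelDiff P Q)}

/-- The `p`-presentation distance: the path pseudometric induced by `dHat`. -/
noncomputable def dPres (p : ℝ≥0∞) (M N : MergeTree) : ℝ :=
  sInf {c | ∃ (n : ℕ) (Z : Fin (n + 1) → MergeTree), Z 0 = M ∧ Z (Fin.last n) = N ∧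
    c = ∑ i : Fin n, dHat p (Z i.castSucc) (Z i.succ)}

/-- One-directional shift map between presented persistent sets. -/
def presMap {k l : ℕ} (P Q : Pres k l) (hc : Compatible P Q) (ε : ℝ)
    (hγ : ∀ i, Q.γ i ≤ P.γ i + ε) (hρ : ∀ j, Q.ρ j ≤ P.ρ j + ε) (t : ℝ) :
    P.toPS.obj t → Q.toPS.obj (t + ε) :=
  Quot.lift
    (fun a => Quot.mk (Q.rel (t + ε)) ⟨a.1, (hγ a.1).trans (by linarith [a.2])⟩)
    (by
      rintro a b ⟨j, hj, hcase⟩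
      by_cases hab : a.1 = b.1
      · exact congrArg _ (Subtype.ext hab)
      · apply Quot.sound
        refine ⟨j, (hρ j).trans (by linarith [hj]), ?_⟩
        have ha : Q.f j = a.1 ∨ Q.g j = a.1 := by
          rcases hcase with ⟨h1, h2⟩ | ⟨h1, h2⟩
          · exact (hc a.1 j).mp (Or.inl h1)
          · exact (hc a.1 j).mp (Or.inr h2)
        have hb : Q.f j = b.1 ∨ Q.g j = b.1 := by
          rcases hcase with ⟨h1, h2⟩ | ⟨h1, h2⟩
          · exact (hc b.1 j).mp (Or.inr h2)
          · exact (hc b.1 j).mp (Or.inl h1)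
        rcases ha with ha | ha <;> rcases hb with hb | hb
        · exact absurd (ha ▸ hb) hab
        · exact Or.inl ⟨ha, hb⟩
        · exact Or.inr ⟨hb, ha⟩
        · exact absurd (ha ▸ hb) hab)

theorem presMap_natural {k l : ℕ} (P Q : Pres k l) (hc : Compatible P Q) (ε : ℝ)
    (hγ : ∀ i, Q.γ i ≤ P.γ i + ε) (hρ : ∀ j, Q.ρ j ≤ P.ρ j + ε)
    {s t : ℝ} (h : s ≤ t) (x : P.toPS.obj s) :
    presMap P Q hc ε hγ hρ t (P.toPS.map h x)
      = Q.toPS.map (by linarith : s + ε ≤ t + ε) (presMap P Q hc ε hγ hρ s x) :=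
  Quot.inductionOn x fun _ => rfl

/-- Interleavings transport along isomorphisms. -/
theorem interleaved_congr {M M' N N' : PersistentSet} (iM : PSIso M M') (iN : PSIso N N')
    {ε : ℝ} (h : Interleaved M N ε) : Interleaved M' N' ε := by
  obtain ⟨hε, φ, ψ, hφn, hψn, hc1, hc2⟩ := h
  let gM : ∀ t, M'.obj t → M.obj t := fun t => Function.surjInv (iM.bij t).2
  let gN : ∀ t, N'.obj t → N.obj t := fun t => Function.surjInv (iN.bij t).2
  have hgM1 : ∀ t x, iM.hom t (gM t x) = x := fun t x => Function.surjInv_eq (iM.bij t).2 x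
  have hgN1 : ∀ t x, iN.hom t (gN t x) = x := fun t x => Function.surjInv_eq (iN.bij t).2 x
  have hgM2 : ∀ t x, gM t (iM.hom t x) = x := fun t x => (iM.bij t).1 (by rw [hgM1])
  have hgN2 : ∀ t x, gN t (iN.hom t x) = x := fun t x => (iN.bij t).1 (by rw [hgN1])
  have hsymM : ∀ {s t : ℝ} (h : s ≤ t) (x : M'.obj s),
      gM t (M'.map h x) = M.map h (gM s x) := by
    intro s t h x
    apply (iM.bij t).1
    rw [hgM1, iM.natural, hgM1]
  have hsymN : ∀ {s t : ℝ} (h : s ≤ t) (x : N'.obj s),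
      gN t (N'.map h x) = N.map h (gN s x) := by
    intro s t h x
    apply (iN.bij t).1
    rw [hgN1, iN.natural, hgN1]
  refine ⟨hε, fun t x => iN.hom (t + ε) (φ t (gM t x)),
      fun t x => iM.hom (t + ε) (ψ t (gN t x)), ?_, ?_, ?_, ?_⟩
  · intro s t h x
    show iN.hom (t + ε) (φ t (gM t (M'.map h x))) = _
    rw [hsymM, hφn, iN.natural]
  · intro s t h x
    show iM.hom (t + ε) (ψ t (gN t (N'.map h x))) = _
    rw [hsymN, hψn, iM.natural]
  · intro s x
    show iM.hom (s + ε + ε) (ψ (s + ε) (gN (s + ε) (iN.hom (s + ε) (φ s (gM s x))))) = _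
    rw [hgN2, hc1, iM.natural, hgM1]
  · intro s x
    show iN.hom (s + ε + ε) (φ (s + ε) (gM (s + ε) (iM.hom (s + ε) (ψ s (gN s x))))) = _
    rw [hgM2, hc2, iN.natural, hgN1]

/-- if merge trees `M`, `N` admit compatible presentations whose label
vectors are at `ℓ∞`-distance `ε`, then `M` and `N` are `ε`-interleaved. -/
theorem interleaved_of_compatible_presentations (M N : MergeTree) {k l : ℕ}
    (P Q : Pres k l) (ε : ℝ) (hc : Compatible P Q)
    (hPM : IsPresentation P M.toPS) (hQN : IsPresentation Q N.toPS)
    (hε : lpNorm ⊤ (labelDiff P Q) = ε) :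
    Interleaved M.toPS N.toPS ε := by
  have hsup : ε = ⨆ i, |labelDiff P Q i| := by
    rw [← hε, lpNorm, if_pos rfl]
  have hbound : ∀ i, |labelDiff P Q i| ≤ ε := by
    intro i
    rw [hsup]
    exact le_ciSup (f := fun i => |labelDiff P Q i|) (Finite.bddAbove_range _) i
  have hε0 : 0 ≤ ε := by
    rw [hsup]; exact Real.iSup_nonneg fun i => abs_nonneg _
  have hγ : ∀ i, |P.γ i - Q.γ i| ≤ ε := by
    intro i
    have := hbound (Fin.castAdd l i)
    rwa [labelDiff, Fin.append_left] at this
  have hρ : ∀ j, |P.ρ j - Q.ρ j| ≤ ε := by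
    intro j
    have := hbound (Fin.natAdd k j)
    rwa [labelDiff, Fin.append_right] at this
  have hγ1 : ∀ i, Q.γ i ≤ P.γ i + ε := fun i => by
    have := abs_le.mp (hγ i); linarith [this.1]
  have hρ1 : ∀ j, Q.ρ j ≤ P.ρ j + ε := fun j => by
    have := abs_le.mp (hρ j); linarith [this.1]
  have hγ2 : ∀ i, P.γ i ≤ Q.γ i + ε := fun i => by
    have := abs_le.mp (hγ i); linarith [this.2]
  have hρ2 : ∀ j, P.ρ j ≤ Q.ρ j + ε := fun j => by
    have := abs_le.mp (hρ j); linarith [this.2]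
  have hc' : Compatible Q P := fun i j => (hc i j).symm
  have hI : Interleaved P.toPS Q.toPS ε := by
    refine ⟨hε0, presMap P Q hc ε hγ1 hρ1, presMap Q P hc' ε hγ2 hρ2,
      fun s t h x => presMap_natural P Q hc ε hγ1 hρ1 h x,
      fun s t h x => presMap_natural Q P hc' ε hγ2 hρ2 h x, ?_, ?_⟩
    · intro s x
      exact Quot.inductionOn x fun a => rfl
    · intro s x
      exact Quot.inductionOn x fun a => rfl
  exact interleaved_congr hPM.some hQN.some hI
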